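/- Let F : ℝ^{n} → ℝ^{n} be C¹ with forward-complete flow E(e,t) of ė = F(e), let Φ(e,t) be the associated transition matrix, and let Q be a symmetric positive definite matrix. Fix e in ℝ^{n} and suppose there is a real number c_e > 0 with |(∂F/∂e)(E(e,t))| ≤ c_e for all t ≥ 0. Then: (i) |vᵀ Φ(e,t)^{-1}| ≤ exp(c_e t)|v| for all v in ℝ^{n} and t ≥ 0; (ii) vᵀ Φ(e,t)ᵀ Q Φ(e,t) v ≥ μ_min{Q} exp(−2 c_e t)|v|² for all v and t ≥ 0; and (iii) if additionally |Φ(e,t)| ≤ k̃ exp(−λ̃ t) for some k̃, λ̃ > 0 (so that P(e) := ∫₀^∞ Φ(e,s)ᵀ Q Φ(e,s) ds is well defined), then P(e) ≥ (μ_min{Q}/(2 c_e)) I. -/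

import Mathlib

open Real Set Filter
open scoped RealInnerProductSpace Topology

/-- Euclidean state space ℝⁿ. -/
abbrev Euc (n : ℕ) := EuclideanSpace ℝ (Fin n)

/-- Smallest eigenvalue of a symmetric operator: the infimum of its quadratic form
on the unit sphere. -/
noncomputable def muMin {n : ℕ} (A : Euc n →L[ℝ] Euc n) : ℝ :=
  sInf {r : ℝ | ∃ v : Euc n, ‖v‖ = 1 ∧ r = ⟪A v, v⟫}

set_option maxHeartbeats 1000000 in
/-- Lower bound on P(e) = ∫₀^∞ Φ(e,s)ᵀ Q Φ(e,s) ds: fix e and suppose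
|∂F/∂e(E(e,t))| ≤ c_e for all t ≥ 0.  Then
(i) |vᵀ Φ(e,t)⁻¹| ≤ exp(c_e t)|v|,
(ii) vᵀ Φ(e,t)ᵀ Q Φ(e,t) v ≥ μ_min{Q} exp(−2c_e t)|v|², and
(iii) if additionally |Φ(e,t)| ≤ k̃ exp(−λ̃ t), then P(e) ≥ (μ_min{Q}/(2c_e)) I. -/
theorem lower_bound_P
    {n : ℕ}
    (F : Euc n → Euc n) (hF : ContDiff ℝ 1 F)
    (Efl : Euc n → ℝ → Euc n)
    (hinit : ∀ e, Efl e 0 = e)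
    (hflow : ∀ e t, 0 ≤ t → HasDerivWithinAt (Efl e) (F (Efl e t)) (Ici 0) t)
    (Φ : Euc n → ℝ → Euc n →L[ℝ] Euc n)
    (hΦ0 : ∀ e, Φ e 0 = ContinuousLinearMap.id ℝ (Euc n))
    (hΦ : ∀ e t, 0 ≤ t →
      HasDerivWithinAt (Φ e) ((fderiv ℝ F (Efl e t)) ∘L Φ e t) (Ici 0) t)
    (Q : Euc n →L[ℝ] Euc n) (hQsa : IsSelfAdjoint Q)
    (hQpos : ∀ v, v ≠ 0 → 0 < ⟪Q v, v⟫)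
    -- fix e, with a bound c_e on the Jacobian along the solution through e
    (e : Euc n) (ce : ℝ) (hce : 0 < ce)
    (hbnd : ∀ t, 0 ≤ t → ‖fderiv ℝ F (Efl e t)‖ ≤ ce)
    -- the inverse of the transition matrix
    (Φinv : ℝ → Euc n →L[ℝ] Euc n)
    (hΦinv : ∀ t, 0 ≤ t →
      Φinv t ∘L Φ e t = ContinuousLinearMap.id ℝ (Euc n) ∧
      Φ e t ∘L Φinv t = ContinuousLinearMap.id ℝ (Euc n)) :
    -- (i)
    (∀ (v : Euc n) (t : ℝ), 0 ≤ t →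
      ‖ContinuousLinearMap.adjoint (Φinv t) v‖ ≤ exp (ce * t) * ‖v‖) ∧
    -- (ii)
    (∀ (v : Euc n) (t : ℝ), 0 ≤ t →
      muMin Q * exp (-2 * ce * t) * ‖v‖ ^ 2 ≤ ⟪Q (Φ e t v), Φ e t v⟫) ∧
    -- (iii)
    (∀ ktl lamtl : ℝ, 0 < ktl → 0 < lamtl →
      (∀ t, 0 ≤ t → ‖Φ e t‖ ≤ ktl * exp (-lamtl * t)) →
      ∀ P : Euc n →L[ℝ] Euc n,
        Tendsto (fun T => ∫ s in (0:ℝ)..T,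
            ContinuousLinearMap.adjoint (Φ e s) ∘L Q ∘L Φ e s) atTop (𝓝 P) →
        ∀ v : Euc n, muMin Q / (2 * ce) * ‖v‖ ^ 2 ≤ ⟪P v, v⟫) := by
  -- continuity of the transition matrix in time
  have contΦ : ContinuousOn (Φ e) (Ici 0) := fun t ht =>
    (hΦ e t ht).continuousWithinAt
  -- key Gronwall-type estimate: ‖v‖ ≤ exp (ce t) ‖Φ e t v‖
  have key : ∀ (v : Euc n) (t : ℝ), 0 ≤ t → ‖v‖ ≤ exp (ce * t) * ‖Φ e t v‖ := by
    intro v t ht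
    set g : ℝ → Euc n := fun s => Φ e (t - s) v with hgdef
    have hmaps : ∀ s ∈ Icc (0:ℝ) t, t - s ∈ Ici (0:ℝ) := by
      intro s hs; simp only [mem_Ici]; linarith [hs.2]
    have hgc : ContinuousOn g (Icc 0 t) := by
      have h1 : ContinuousOn (fun s : ℝ => Φ e (t - s)) (Icc 0 t) :=
        contΦ.comp (continuousOn_const.sub continuousOn_id) hmaps
      exact h1.clm_apply continuousOn_const
    have hgd : ∀ s ∈ Ico (0:ℝ) t,
        HasDerivWithinAt g (-(fderiv ℝ F (Efl e (t - s)) (g s))) (Ici s) s := by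
      intro s hs
      have hτ : 0 < t - s := by linarith [hs.2]
      have hψ : HasDerivAt (fun r => Φ e r v)
          ((fderiv ℝ F (Efl e (t - s))) (Φ e (t - s) v)) (t - s) := by
        have h1 : HasDerivAt (Φ e)
            ((fderiv ℝ F (Efl e (t - s))) ∘L Φ e (t - s)) (t - s) :=
          (hΦ e (t - s) hτ.le).hasDerivAt (Ici_mem_nhds hτ)
        have h2 := h1.clm_apply (hasDerivAt_const (t - s) v)
        simpa using h2
      have hsub : HasDerivAt (fun s : ℝ => t - s) (-1) s := by
        simpa using (hasDerivAt_id s).const_sub t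
      have hcomp := hψ.scomp s hsub
      have : HasDerivAt g (-(fderiv ℝ F (Efl e (t - s)) (g s))) s := by
        simpa [hgdef, neg_one_smul, Function.comp_def] using hcomp
      exact this.hasDerivWithinAt
    have hb : ∀ s ∈ Ico (0:ℝ) t,
        ‖-(fderiv ℝ F (Efl e (t - s)) (g s))‖ ≤ ce * ‖g s‖ + 0 := by
      intro s hs
      have hτ : (0:ℝ) ≤ t - s := by linarith [hs.2]
      rw [norm_neg, add_zero]
      calc ‖fderiv ℝ F (Efl e (t - s)) (g s)‖
          ≤ ‖fderiv ℝ F (Efl e (t - s))‖ * ‖g s‖ :=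
            (fderiv ℝ F (Efl e (t - s))).le_opNorm (g s)
        _ ≤ ce * ‖g s‖ := mul_le_mul_of_nonneg_right (hbnd _ hτ) (norm_nonneg _)
    have hG := norm_le_gronwallBound_of_norm_deriv_right_le hgc hgd le_rfl hb t
      ⟨ht, le_rfl⟩
    rw [gronwallBound_ε0] at hG
    have hgt : g t = v := by simp [hgdef, hΦ0 e]
    have hg0 : g 0 = Φ e t v := by simp [hgdef]
    rw [hgt, hg0, sub_zero] at hG
    linarith [hG]
  -- part (i)
  have part1 : ∀ (v : Euc n) (t : ℝ), 0 ≤ t →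
      ‖ContinuousLinearMap.adjoint (Φinv t) v‖ ≤ exp (ce * t) * ‖v‖ := by
    intro v t ht
    have hinvb : ∀ w, ‖Φinv t w‖ ≤ exp (ce * t) * ‖w‖ := by
      intro w
      have h1 := key (Φinv t w) t ht
      have h2 : Φ e t (Φinv t w) = w := by
        rw [← ContinuousLinearMap.comp_apply, (hΦinv t ht).2]; rfl
      rwa [h2] at h1
    have hop : ‖Φinv t‖ ≤ exp (ce * t) :=
      ContinuousLinearMap.opNorm_le_bound _ (exp_pos _).le hinvb
    calc ‖ContinuousLinearMap.adjoint (Φinv t) v‖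
        ≤ ‖ContinuousLinearMap.adjoint (Φinv t)‖ * ‖v‖ :=
          (ContinuousLinearMap.adjoint (Φinv t)).le_opNorm v
      _ = ‖Φinv t‖ * ‖v‖ := by
          rw [LinearIsometryEquiv.norm_map ContinuousLinearMap.adjoint (Φinv t)]
      _ ≤ exp (ce * t) * ‖v‖ := mul_le_mul_of_nonneg_right hop (norm_nonneg v)
  -- properties of muMin
  have hSlb : ∀ r ∈ {r : ℝ | ∃ v : Euc n, ‖v‖ = 1 ∧ r = ⟪Q v, v⟫}, 0 ≤ r := by
    rintro r ⟨v, hv, rfl⟩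
    have hv0 : v ≠ 0 := by
      intro h; rw [h, norm_zero] at hv; norm_num at hv
    exact (hQpos v hv0).le
  have hmu0 : 0 ≤ muMin Q := Real.sInf_nonneg hSlb
  have hquad : ∀ u : Euc n, muMin Q * ‖u‖ ^ 2 ≤ ⟪Q u, u⟫ := by
    intro u
    rcases eq_or_ne u 0 with rfl | hu
    · simp
    · have hupos : (0:ℝ) < ‖u‖ := norm_pos_iff.mpr hu
      have hmem : ⟪Q (‖u‖⁻¹ • u), ‖u‖⁻¹ • u⟫ ∈
          {r : ℝ | ∃ v : Euc n, ‖v‖ = 1 ∧ r = ⟪Q v, v⟫} :=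
        ⟨‖u‖⁻¹ • u, norm_smul_inv_norm hu, rfl⟩
      have h1 : muMin Q ≤ ⟪Q (‖u‖⁻¹ • u), ‖u‖⁻¹ • u⟫ :=
        csInf_le ⟨0, hSlb⟩ hmem
      have h2 : ⟪Q (‖u‖⁻¹ • u), ‖u‖⁻¹ • u⟫ = ‖u‖⁻¹ * (‖u‖⁻¹ * ⟪Q u, u⟫) := by
        rw [map_smul, real_inner_smul_left, real_inner_smul_right]
      rw [h2] at h1
      have h3 := mul_le_mul_of_nonneg_right h1 (sq_nonneg ‖u‖)
      have h4 : ∀ c : ℝ, ‖u‖⁻¹ * (‖u‖⁻¹ * c) * ‖u‖ ^ 2 = c := by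
        intro c
        have hne : ‖u‖ ≠ 0 := ne_of_gt hupos
        have hinv : ‖u‖⁻¹ * ‖u‖ = 1 := inv_mul_cancel₀ hne
        linear_combination c * (‖u‖⁻¹ * ‖u‖ + 1) * hinv
      rwa [h4] at h3
  -- part (ii)
  have part2 : ∀ (v : Euc n) (t : ℝ), 0 ≤ t →
      muMin Q * exp (-2 * ce * t) * ‖v‖ ^ 2 ≤ ⟪Q (Φ e t v), Φ e t v⟫ := by
    intro v t ht
    have h1 := key v t ht
    have hE : exp (-2 * ce * t) * exp (ce * t) * exp (ce * t) = 1 := by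
      rw [← Real.exp_add, ← Real.exp_add, show -2 * ce * t + ce * t + ce * t = 0 by ring,
        Real.exp_zero]
    have h2 : exp (-2 * ce * t) * ‖v‖ ^ 2 ≤ ‖Φ e t v‖ ^ 2 := by
      nlinarith [norm_nonneg v, norm_nonneg (Φ e t v), exp_pos (ce * t),
        exp_pos (-2 * ce * t), mul_le_mul h1 h1 (norm_nonneg v)
          (by positivity : (0:ℝ) ≤ exp (ce * t) * ‖Φ e t v‖)]
    calc muMin Q * exp (-2 * ce * t) * ‖v‖ ^ 2
        = muMin Q * (exp (-2 * ce * t) * ‖v‖ ^ 2) := by ring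
      _ ≤ muMin Q * ‖Φ e t v‖ ^ 2 := mul_le_mul_of_nonneg_left h2 hmu0
      _ ≤ ⟪Q (Φ e t v), Φ e t v⟫ := hquad _
  refine ⟨part1, part2, ?_⟩
  -- part (iii)
  intro ktl lamtl hk hl hdecay P hP v
  -- continuity / integrability of the integrand
  have hAcont : ContinuousOn
      (fun s => ContinuousLinearMap.adjoint (Φ e s) ∘L Q ∘L Φ e s) (Ici 0) := by
    have h1 : ContinuousOn (fun s => ContinuousLinearMap.adjoint (Φ e s)) (Ici 0) :=
      (ContinuousLinearMap.adjoint.continuous.comp_continuousOn contΦ)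
    exact h1.clm_comp (continuousOn_const.clm_comp contΦ)
  have hAint : ∀ T : ℝ, 0 ≤ T → IntervalIntegrable
      (fun s => ContinuousLinearMap.adjoint (Φ e s) ∘L Q ∘L Φ e s)
      MeasureTheory.volume 0 T := by
    intro T hT
    apply ContinuousOn.intervalIntegrable
    rw [uIcc_of_le hT]
    exact hAcont.mono Icc_subset_Ici_self
  have hψc : ContinuousOn (fun s => Φ e s v) (Ici 0) :=
    contΦ.clm_apply continuousOn_const
  have hQψc : ContinuousOn (fun s => ⟪Q (Φ e s v), Φ e s v⟫) (Ici 0) :=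
    (Q.continuous.comp_continuousOn hψc).inner hψc
  have hQψint : ∀ T : ℝ, 0 ≤ T → IntervalIntegrable
      (fun s => ⟪Q (Φ e s v), Φ e s v⟫) MeasureTheory.volume 0 T := by
    intro T hT
    apply ContinuousOn.intervalIntegrable
    rw [uIcc_of_le hT]
    exact hQψc.mono Icc_subset_Ici_self
  -- swapping evaluation and the integral
  have hswap : ∀ T : ℝ, 0 ≤ T →
      ⟪(∫ s in (0:ℝ)..T, ContinuousLinearMap.adjoint (Φ e s) ∘L Q ∘L Φ e s) v, v⟫
        = ∫ s in (0:ℝ)..T, ⟪Q (Φ e s v), Φ e s v⟫ := by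
    intro T hT
    rw [ContinuousLinearMap.intervalIntegral_apply (hAint T hT) v]
    have hint2 : IntervalIntegrable
        (fun s => (ContinuousLinearMap.adjoint (Φ e s) ∘L Q ∘L Φ e s) v)
        MeasureTheory.volume 0 T := by
      apply ContinuousOn.intervalIntegrable
      rw [uIcc_of_le hT]
      exact (hAcont.clm_apply continuousOn_const).mono Icc_subset_Ici_self
    have h5 := ContinuousLinearMap.intervalIntegral_comp_comm (innerSL ℝ v) hint2
    simp only [innerSL_apply_apply] at h5
    rw [real_inner_comm, ← h5]
    refine intervalIntegral.integral_congr fun s _ => ?_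
    simp only [ContinuousLinearMap.comp_apply]
    rw [real_inner_comm, ContinuousLinearMap.adjoint_inner_left]
  -- explicit value of the exponential integral
  have hexpint : ∀ T : ℝ,
      ∫ s in (0:ℝ)..T, exp (-2 * ce * s) = (1 - exp (-2 * ce * T)) / (2 * ce) := by
    intro T
    have hD : ∀ s ∈ uIcc (0:ℝ) T,
        HasDerivAt (fun x => exp (-2 * ce * x) / (-2 * ce)) (exp (-2 * ce * s)) s := by
      intro s _
      have h1 : HasDerivAt (fun x : ℝ => -2 * ce * x) (-2 * ce) s := by
        simpa using (hasDerivAt_id s).const_mul (-2 * ce)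
      have h2 := (h1.exp).div_const (-2 * ce)
      have h3 : exp (-2 * ce * s) * (-2 * ce) / (-2 * ce) = exp (-2 * ce * s) := by
        field_simp
      rwa [h3] at h2
    have hI : IntervalIntegrable (fun s => exp (-2 * ce * s))
        MeasureTheory.volume 0 T :=
      (Continuous.intervalIntegrable
        (Continuous.rexp (continuous_const.mul continuous_id)) 0 T)
    rw [intervalIntegral.integral_eq_sub_of_hasDerivAt hD hI]
    simp only [mul_zero, Real.exp_zero]
    field_simp
    ring
  -- lower bound for finite T
  have hlow : ∀ T : ℝ, 0 ≤ T →
      muMin Q * ‖v‖ ^ 2 * ((1 - exp (-2 * ce * T)) / (2 * ce)) ≤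
      ⟪(∫ s in (0:ℝ)..T, ContinuousLinearMap.adjoint (Φ e s) ∘L Q ∘L Φ e s) v, v⟫ := by
    intro T hT
    rw [hswap T hT, ← hexpint T]
    have h1 : ∀ s ∈ Icc (0:ℝ) T,
        muMin Q * ‖v‖ ^ 2 * exp (-2 * ce * s) ≤ ⟪Q (Φ e s v), Φ e s v⟫ := by
      intro s hs
      have := part2 v s hs.1
      linarith [this, show muMin Q * ‖v‖ ^ 2 * exp (-2 * ce * s)
        = muMin Q * exp (-2 * ce * s) * ‖v‖ ^ 2 from by ring]
    have hIl : IntervalIntegrable (fun s => muMin Q * ‖v‖ ^ 2 * exp (-2 * ce * s))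
        MeasureTheory.volume 0 T :=
      (Continuous.intervalIntegrable
        (continuous_const.mul (Continuous.rexp (continuous_const.mul continuous_id))) 0 T)
    have h2 := intervalIntegral.integral_mono_on hT hIl (hQψint T hT) h1
    calc muMin Q * ‖v‖ ^ 2 * ∫ s in (0:ℝ)..T, exp (-2 * ce * s)
        = ∫ s in (0:ℝ)..T, muMin Q * ‖v‖ ^ 2 * exp (-2 * ce * s) := by
          rw [intervalIntegral.integral_const_mul]
      _ ≤ ∫ s in (0:ℝ)..T, ⟪Q (Φ e s v), Φ e s v⟫ := h2
  -- limits
  have hexp0 : Tendsto (fun T : ℝ => exp (-2 * ce * T)) atTop (𝓝 0) := by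
    have h1 : Tendsto (fun T : ℝ => -2 * ce * T) atTop atBot := by
      have h0 : Tendsto (fun T : ℝ => 2 * ce * T) atTop atTop :=
        tendsto_id.const_mul_atTop (by positivity)
      have heq : (fun T : ℝ => -2 * ce * T) = fun T : ℝ => -(2 * ce * T) := by
        funext T; ring
      rw [heq]
      exact tendsto_neg_atTop_atBot.comp h0
    exact Real.tendsto_exp_atBot.comp h1
  have hlim1 : Tendsto (fun T : ℝ => muMin Q * ‖v‖ ^ 2 * ((1 - exp (-2 * ce * T)) / (2 * ce)))
      atTop (𝓝 (muMin Q * ‖v‖ ^ 2 * ((1 - 0) / (2 * ce)))) :=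
    tendsto_const_nhds.mul ((tendsto_const_nhds.sub hexp0).div_const _)
  have hlim2 : Tendsto (fun T : ℝ =>
      ⟪(∫ s in (0:ℝ)..T, ContinuousLinearMap.adjoint (Φ e s) ∘L Q ∘L Φ e s) v, v⟫)
      atTop (𝓝 ⟪P v, v⟫) := by
    have h1 : Tendsto (fun T : ℝ =>
        (∫ s in (0:ℝ)..T, ContinuousLinearMap.adjoint (Φ e s) ∘L Q ∘L Φ e s) v)
        atTop (𝓝 (P v)) :=
      ((ContinuousLinearMap.apply ℝ (Euc n) v).continuous.tendsto P).comp hP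
    exact h1.inner tendsto_const_nhds
  have hev : (fun T : ℝ => muMin Q * ‖v‖ ^ 2 * ((1 - exp (-2 * ce * T)) / (2 * ce))) ≤ᶠ[atTop]
      (fun T : ℝ =>
        ⟪(∫ s in (0:ℝ)..T, ContinuousLinearMap.adjoint (Φ e s) ∘L Q ∘L Φ e s) v, v⟫) := by
    filter_upwards [eventually_ge_atTop (0:ℝ)] with T hT using hlow T hT
  have hfinal := le_of_tendsto_of_tendsto hlim1 hlim2 hev
  have heq : muMin Q * ‖v‖ ^ 2 * ((1 - 0) / (2 * ce)) = muMin Q / (2 * ce) * ‖v‖ ^ 2 := by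
    field_simp
    ring
  linarith [hfinal]
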